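/- Let F be a field, V and P nonsingular k×k matrices over F, Q = P⁻¹ = [q_{ij}], U = V·P, V̂ = (Vᵗ)⁻¹, and let δ, ε, δ', ε' ∈ F satisfy δδ' + εε' = 1 and εδ' + δε' = 0. Let X be any k×k matrix over F with columns x_1,…,x_k, set Y = δ V̂ Xᵗ U + ε X P with columns y_1,…,y_k, and let z'_j = ∑_{ℓ=1}^k q_{ℓj} y_ℓ be the j-th column of YQ. Then for all i, j ∈ {1,…,k}: v_iᵗ x_j = δ' (v_jᵗ z'_i) + ε' (v_iᵗ z'_j), where v_1,…,v_k are the columns of V. -/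
import Mathlib


open Matrix

/-- Dual identity: with `Y = δ V̂ Xᵗ U + ε X P`,
`z'_j = ∑ ℓ q_{ℓj} y_ℓ` and coding coefficients satisfying `δδ' + εε' = 1`,
`εδ' + δε' = 0`, for all `i, j`: `v_iᵗ x_j = δ' (v_jᵗ z'_i) + ε' (v_iᵗ z'_j)`. -/
theorem dual_downloaded_symbol_identity
    {F : Type*} [Field F] {k : ℕ}
    (V P : Matrix (Fin k) (Fin k) F)
    (hV : IsUnit V.det) (hP : IsUnit P.det)
    (δ ε δ' ε' : F)
    (h1 : δ * δ' + ε * ε' = 1) (h2 : ε * δ' + δ * ε' = 0)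
    (X : Matrix (Fin k) (Fin k) F)
    (Y : Matrix (Fin k) (Fin k) F)
    (hY : Y = δ • ((Vᵀ)⁻¹ * Xᵀ * (V * P)) + ε • (X * P))
    (z' : Fin k → Fin k → F)
    (hz' : ∀ j idx, z' j idx = ∑ ℓ, P⁻¹ ℓ j * Y idx ℓ) :
    ∀ i j : Fin k,
      (fun idx => V idx i) ⬝ᵥ (fun idx => X idx j) =
        δ' * ((fun idx => V idx j) ⬝ᵥ z' i) +
        ε' * ((fun idx => V idx i) ⬝ᵥ z' j) := by
  intro i j
  -- z' as a matrix
  have hZ : ∀ a b, z' a b = (Y * P⁻¹) b a := by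
    intro a b
    rw [hz', Matrix.mul_apply]
    exact Finset.sum_congr rfl (fun ℓ _ => mul_comm _ _)
  have hVt : IsUnit (Vᵀ).det := by rwa [Matrix.det_transpose]
  have hZeq : Y * P⁻¹ = δ • ((Vᵀ)⁻¹ * Xᵀ * V) + ε • X := by
    rw [hY]
    rw [Matrix.add_mul, Matrix.smul_mul, Matrix.smul_mul]
    congr 1
    · congr 1
      rw [Matrix.mul_assoc ((Vᵀ)⁻¹ * Xᵀ) (V * P) P⁻¹, Matrix.mul_assoc V P P⁻¹,
        Matrix.mul_nonsing_inv _ hP, Matrix.mul_one]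
    · congr 1
      rw [Matrix.mul_assoc, Matrix.mul_nonsing_inv _ hP, Matrix.mul_one]
  -- compute dot products
  have key : ∀ a b : Fin k,
      (fun idx => V idx a) ⬝ᵥ z' b = δ * (Vᵀ * X) b a + ε * (Vᵀ * X) a b := by
    intro a b
    have : (fun idx => V idx a) ⬝ᵥ z' b = (Vᵀ * (Y * P⁻¹)) a b := by
      rw [Matrix.mul_apply, dotProduct]
      exact Finset.sum_congr rfl (fun ℓ _ => by rw [hZ, Matrix.transpose_apply])
    rw [this, hZeq, Matrix.mul_add, Matrix.mul_smul, Matrix.mul_smul]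
    have hV1 : Vᵀ * ((Vᵀ)⁻¹ * Xᵀ * V) = Xᵀ * V := by
      rw [← Matrix.mul_assoc, ← Matrix.mul_assoc, Matrix.mul_nonsing_inv _ hVt,
        Matrix.one_mul]
    rw [hV1]
    simp only [Matrix.add_apply, Matrix.smul_apply, smul_eq_mul]
    congr 1
    rw [show (Xᵀ * V) a b = (Vᵀ * X) b a by
      rw [← Matrix.transpose_apply (Vᵀ * X), Matrix.transpose_mul, Matrix.transpose_transpose]]
  have hdot : (fun idx => V idx i) ⬝ᵥ (fun idx => X idx j) = (Vᵀ * X) i j := by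
    rw [Matrix.mul_apply, dotProduct]
    exact Finset.sum_congr rfl (fun ℓ _ => by rw [Matrix.transpose_apply])
  rw [hdot, key j i, key i j]
  linear_combination (-((Vᵀ * X) i j)) * h1 + (-((Vᵀ * X) j i)) * h2
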